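/- Let d ≥ 4 be an integer and let x, y be real numbers with y > 0. Then −y · (Re(g_d(y + 2πi x)) − g_d(y)) = T1(x,y) + T2(x,y) + T3(x,y), and moreover T1(x,y) ≥ 0, T2(x,y) ≥ 0, and T3(x,y) ≥ 0. -/

import Mathlib

open Real Complex

lemma summable_res (z : ℂ) (hz : ‖z‖ < 1) (m a : ℕ) :
    Summable (fun n : ℕ => if n % m = a then z ^ n else 0) := by
  apply Summable.of_norm_bounded (summable_geometric_of_lt_one (norm_nonneg z) hz)
  intro n
  by_cases h : n % m = a <;> simp [h, norm_pow]

lemma geom_res (z : ℂ) (hz : ‖z‖ < 1) (hz0 : z ≠ 0) (m a : ℕ) (hm : 0 < m) (ha : a < m) :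
    ∑' n : ℕ, (if n % m = a then z ^ n else 0) = z ^ a * (1 - z ^ m)⁻¹ := by
  have hzm : ‖z ^ m‖ < 1 := by
    rw [norm_pow]; exact pow_lt_one₀ (norm_nonneg z) hz hm.ne'
  have key : ∑' n : ℕ, (if n % m = a then z ^ n else 0) = ∑' k : ℕ, z ^ (m * k + a) := by
    apply tsum_eq_tsum_of_ne_zero_bij (g := fun k : ℕ => z ^ (m * k + a))
      (i := fun k => m * (k : ℕ) + a)
    · intro k l hkl
      have : m * (k : ℕ) + a = m * (l : ℕ) + a := hkl
      have h2 : (k : ℕ) = l := Nat.eq_of_mul_eq_mul_left hm (Nat.add_right_cancel this)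
      exact Subtype.ext h2
    · intro n hn
      have h1 : n % m = a := by
        by_contra h; simp [h] at hn
      refine ⟨⟨n / m, ?_⟩, ?_⟩
      · simp only [Function.mem_support]
        exact pow_ne_zero _ hz0
      · show m * (n / m) + a = n
        rw [← h1]; exact Nat.div_add_mod n m
    · intro k
      have : (m * (k : ℕ) + a) % m = a := by
        simp [Nat.mul_add_mod, Nat.mod_eq_of_lt ha]
      simp [this]
  rw [key]
  have : ∀ k : ℕ, z ^ (m * k + a) = (z ^ m) ^ k * z ^ a := by
    intro k; rw [pow_add, pow_mul]
  simp_rw [this]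
  rw [tsum_mul_right, tsum_geometric_of_norm_lt_one hzm]
  ring


/-- g_d(τ) = Σ e^{−nτ}, summed over integers n ≥ 0 with n ≡ ±2 (mod d+3). -/
noncomputable def gFun (d : ℕ) (τ : ℂ) : ℂ :=
  ∑' n : ℕ, if (n : ZMod (d + 3)) = 2 ∨ (n : ZMod (d + 3)) = -2 then
    Complex.exp (-(n : ℂ) * τ) else 0

lemma gFun_eq (d : ℕ) (hd : 4 ≤ d) (τ : ℂ) (hτ : 0 < τ.re) :
    gFun d τ = (Complex.exp (-τ) ^ 2 + Complex.exp (-τ) ^ (d + 1)) *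
      (1 - Complex.exp (-τ) ^ (d + 3))⁻¹ := by
  set z := Complex.exp (-τ) with hzdef
  have hz : ‖z‖ < 1 := by
    rw [hzdef, Complex.norm_exp, Real.exp_lt_one_iff]
    simpa using hτ
  have hz0 : z ≠ 0 := Complex.exp_ne_zero _
  have h2 : ∀ n : ℕ, ((n : ZMod (d + 3)) = 2) ↔ n % (d + 3) = 2 := by
    intro n
    rw [show (2 : ZMod (d + 3)) = ((2 : ℕ) : ZMod (d + 3)) by norm_cast,
      ZMod.natCast_eq_natCast_iff', Nat.mod_eq_of_lt (show (2:ℕ) < d + 3 by omega)]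
  have hm2 : ∀ n : ℕ, ((n : ZMod (d + 3)) = -2) ↔ n % (d + 3) = d + 1 := by
    intro n
    have hds : ((d + 3 : ℕ) : ZMod (d + 3)) = 0 := ZMod.natCast_self _
    have hkey : (-2 : ZMod (d + 3)) = ((d + 1 : ℕ) : ZMod (d + 3)) := by
      push_cast at hds ⊢
      linear_combination -hds
    rw [hkey, ZMod.natCast_eq_natCast_iff', Nat.mod_eq_of_lt (show d + 1 < d + 3 by omega)]
  have hexp : ∀ n : ℕ, Complex.exp (-(n : ℂ) * τ) = z ^ n := by
    intro n
    rw [hzdef, ← Complex.exp_nat_mul]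
    ring_nf
  have hsplit : ∀ n : ℕ,
      (if (n : ZMod (d + 3)) = 2 ∨ (n : ZMod (d + 3)) = -2 then Complex.exp (-(n : ℂ) * τ) else 0)
      = (if n % (d + 3) = 2 then z ^ n else 0) + (if n % (d + 3) = d + 1 then z ^ n else 0) := by
    intro n
    rw [hexp]
    by_cases hc1 : n % (d + 3) = 2
    · rw [if_pos, if_pos hc1, if_neg (by omega)]
      · ring
      · left; exact (h2 n).mpr hc1
    · by_cases hc2 : n % (d + 3) = d + 1
      · rw [if_pos, if_neg hc1, if_pos hc2]
        · ring
        · right; exact (hm2 n).mpr hc2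
      · rw [if_neg, if_neg hc1, if_neg hc2]
        · ring
        · rw [h2, hm2]; tauto
  rw [gFun]
  calc (∑' n : ℕ, if (n : ZMod (d + 3)) = 2 ∨ (n : ZMod (d + 3)) = -2 then
          Complex.exp (-(n : ℂ) * τ) else 0)
      = ∑' n : ℕ, ((if n % (d + 3) = 2 then z ^ n else 0)
          + (if n % (d + 3) = d + 1 then z ^ n else 0)) := by
        exact tsum_congr hsplit
    _ = (∑' n : ℕ, (if n % (d + 3) = 2 then z ^ n else 0))
          + ∑' n : ℕ, (if n % (d + 3) = d + 1 then z ^ n else 0) :=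
        Summable.tsum_add (summable_res z hz _ _) (summable_res z hz _ _)
    _ = z ^ 2 * (1 - z ^ (d + 3))⁻¹ + z ^ (d + 1) * (1 - z ^ (d + 3))⁻¹ := by
        rw [geom_res z hz hz0 (d + 3) 2 (by omega) (by omega),
          geom_res z hz hz0 (d + 3) (d + 1) (by omega) (by omega)]
    _ = (z ^ 2 + z ^ (d + 1)) * (1 - z ^ (d + 3))⁻¹ := by ring

lemma mul_inv_re (a b : ℂ) : (a * b⁻¹).re =
    (a.re * b.re + a.im * b.im) / Complex.normSq b := by
  rw [Complex.mul_re, Complex.inv_re, Complex.inv_im, Complex.normSq_apply]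
  simp only [div_eq_mul_inv, neg_mul]
  ring

lemma gFun_real (d : ℕ) (hd : 4 ≤ d) (y : ℝ) (hy : 0 < y) :
    (gFun d (y : ℂ)).re = (Real.exp (-y) ^ 2 + Real.exp (-y) ^ (d + 1)) *
      (1 - Real.exp (-y) ^ (d + 3))⁻¹ := by
  rw [gFun_eq d hd _ (by simpa using hy)]
  have hz : Complex.exp (-(y : ℂ)) = ((Real.exp (-y) : ℝ) : ℂ) := by
    rw [show (-(y : ℂ)) = ((-y : ℝ) : ℂ) by push_cast; ring, Complex.ofReal_exp]
  rw [hz]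
  have : (((Real.exp (-y) : ℝ) : ℂ) ^ 2 + ((Real.exp (-y) : ℝ) : ℂ) ^ (d + 1)) *
      (1 - ((Real.exp (-y) : ℝ) : ℂ) ^ (d + 3))⁻¹ =
      (((Real.exp (-y) ^ 2 + Real.exp (-y) ^ (d + 1)) *
        (1 - Real.exp (-y) ^ (d + 3))⁻¹ : ℝ) : ℂ) := by
    push_cast
    ring
  rw [this, Complex.ofReal_re]

lemma exp_pow_re (x y : ℝ) (k : ℕ) :
    (Complex.exp (-((y : ℂ) + 2 * (π : ℂ) * (x : ℂ) * Complex.I)) ^ k).re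
      = Real.exp (-y) ^ k * Real.cos (2 * π * ((k : ℝ) * x)) := by
  rw [← Complex.exp_nat_mul, Complex.exp_re]
  have h1 : ((k : ℂ) * -((y : ℂ) + 2 * (π : ℂ) * (x : ℂ) * Complex.I)).re = (k : ℝ) * (-y) := by
    simp
  have h2 : ((k : ℂ) * -((y : ℂ) + 2 * (π : ℂ) * (x : ℂ) * Complex.I)).im
      = -(2 * π * ((k : ℝ) * x)) := by
    simp
    ring
  rw [h1, h2, Real.cos_neg, Real.exp_nat_mul]

lemma exp_pow_im (x y : ℝ) (k : ℕ) :
    (Complex.exp (-((y : ℂ) + 2 * (π : ℂ) * (x : ℂ) * Complex.I)) ^ k).im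
      = -(Real.exp (-y) ^ k * Real.sin (2 * π * ((k : ℝ) * x))) := by
  rw [← Complex.exp_nat_mul, Complex.exp_im]
  have h1 : ((k : ℂ) * -((y : ℂ) + 2 * (π : ℂ) * (x : ℂ) * Complex.I)).re = (k : ℝ) * (-y) := by
    simp
  have h2 : ((k : ℂ) * -((y : ℂ) + 2 * (π : ℂ) * (x : ℂ) * Complex.I)).im
      = -(2 * π * ((k : ℝ) * x)) := by
    simp
    ring
  rw [h1, h2, Real.sin_neg, Real.exp_nat_mul]
  ring

lemma gFun_re (d : ℕ) (hd : 4 ≤ d) (x y : ℝ) (hy : 0 < y) :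
    (gFun d ((y : ℂ) + 2 * (π : ℂ) * (x : ℂ) * Complex.I)).re =
      (Real.exp (-y) ^ 2 * Real.cos (4 * π * x)
        + Real.exp (-y) ^ (d + 1) * Real.cos (2 * π * ((d : ℝ) + 1) * x)
        - Real.exp (-y) ^ (d + 5) * Real.cos (2 * π * ((d : ℝ) + 1) * x)
        - Real.exp (-y) ^ (2 * d + 4) * Real.cos (4 * π * x))
      / (1 - 2 * Real.exp (-y) ^ (d + 3) * Real.cos (2 * π * ((d : ℝ) + 3) * x)
          + Real.exp (-y) ^ (2 * d + 6)) := by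
  rw [gFun_eq d hd _ (by simpa using hy)]
  rw [mul_inv_re, Complex.normSq_apply]
  rw [Complex.add_re, Complex.add_im, Complex.sub_re, Complex.sub_im, Complex.one_re,
    Complex.one_im, exp_pow_re, exp_pow_re, exp_pow_re, exp_pow_im, exp_pow_im, exp_pow_im]
  rw [show (2 * π * (((2:ℕ) : ℝ) * x)) = 4 * π * x by push_cast; ring,
    show (2 * π * (((d + 1 : ℕ) : ℝ) * x)) = 2 * π * ((d : ℝ) + 1) * x by push_cast; ring,
    show (2 * π * (((d + 3 : ℕ) : ℝ) * x)) = 2 * π * ((d : ℝ) + 3) * x by push_cast; ring]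
  have hq1 : Real.cos (2 * π * ((d : ℝ) + 1) * x) =
      Real.cos (2 * π * ((d : ℝ) + 3) * x) * Real.cos (4 * π * x) +
      Real.sin (2 * π * ((d : ℝ) + 3) * x) * Real.sin (4 * π * x) := by
    have h := Real.cos_sub (2 * π * ((d : ℝ) + 3) * x) (4 * π * x)
    rw [show 2 * π * ((d : ℝ) + 3) * x - 4 * π * x = 2 * π * ((d : ℝ) + 1) * x by ring] at h
    exact h
  have hq2 : Real.cos (4 * π * x) =
      Real.cos (2 * π * ((d : ℝ) + 3) * x) * Real.cos (2 * π * ((d : ℝ) + 1) * x) +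
      Real.sin (2 * π * ((d : ℝ) + 3) * x) * Real.sin (2 * π * ((d : ℝ) + 1) * x) := by
    have h := Real.cos_sub (2 * π * ((d : ℝ) + 3) * x) (2 * π * ((d : ℝ) + 1) * x)
    rw [show 2 * π * ((d : ℝ) + 3) * x - 2 * π * ((d : ℝ) + 1) * x = 4 * π * x by ring] at h
    exact h
  congr 1
  · linear_combination (Real.exp (-y) ^ (d + 5)) * hq1 + (Real.exp (-y) ^ (2 * d + 4)) * hq2
  · linear_combination (Real.exp (-y) ^ (2 * d + 6)) *
      Real.sin_sq_add_cos_sq (2 * π * ((d : ℝ) + 3) * x)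

/-- The common denominator D(x,y). -/
noncomputable def Dden (d : ℕ) (x y : ℝ) : ℝ :=
  ((Real.exp (((d : ℝ) + 3) * y) - 1) / y) *
    (Real.exp (2 * ((d : ℝ) + 3) * y) -
      2 * Real.exp (((d : ℝ) + 3) * y) * Real.cos (2 * π * ((d : ℝ) + 3) * x) + 1)

noncomputable def T1 (d : ℕ) (x y : ℝ) : ℝ :=
  (1 - Real.cos (4 * π * x)) *
    (Real.exp ((3 * (d : ℝ) + 7) * y) + Real.exp (2 * y) -
      Real.exp ((2 * (d : ℝ) + 4) * y) - Real.exp (((d : ℝ) + 5) * y)) / Dden d x y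

noncomputable def T2 (d : ℕ) (x y : ℝ) : ℝ :=
  (1 - Real.cos (2 * π * ((d : ℝ) + 1) * x)) *
    (Real.exp ((2 * (d : ℝ) + 8) * y) + Real.exp (((d : ℝ) + 1) * y) -
      Real.exp ((2 * (d : ℝ) + 4) * y) - Real.exp (((d : ℝ) + 5) * y)) / Dden d x y

noncomputable def T3 (d : ℕ) (x y : ℝ) : ℝ :=
  2 * (1 - Real.cos (2 * π * ((d : ℝ) + 3) * x)) *
    (Real.exp ((2 * (d : ℝ) + 4) * y) + Real.exp (((d : ℝ) + 5) * y)) / Dden d x y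

set_option maxHeartbeats 4000000 in
/-- For d ≥ 4 and real x, y with y > 0, we have
−y(Re(g_d(y + 2πix)) − g_d(y)) = T1 + T2 + T3, with each Ti nonnegative. -/
theorem T_decomposition (d : ℕ) (hd : 4 ≤ d) (x y : ℝ) (hy : 0 < y) :
    -y * ((gFun d ((y : ℂ) + 2 * (π : ℂ) * (x : ℂ) * Complex.I)).re -
        (gFun d (y : ℂ)).re) = T1 d x y + T2 d x y + T3 d x y ∧
    0 ≤ T1 d x y ∧ 0 ≤ T2 d x y ∧ 0 ≤ T3 d x y := by
  have hEy : 1 < Real.exp y := by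
    rw [show (1 : ℝ) = Real.exp 0 by simp]
    exact Real.exp_lt_exp.mpr hy
  have hEy0 : (0:ℝ) < Real.exp y := Real.exp_pos y
  have he1 : Real.exp (((d : ℝ) + 3) * y) = Real.exp y ^ (d + 3) := by
    rw [show ((d : ℝ) + 3) = ((d + 3 : ℕ) : ℝ) by push_cast; ring, Real.exp_nat_mul]
  have he2 : Real.exp (2 * ((d : ℝ) + 3) * y) = Real.exp y ^ (2 * d + 6) := by
    rw [show (2 * ((d : ℝ) + 3)) = ((2 * d + 6 : ℕ) : ℝ) by push_cast; ring, Real.exp_nat_mul]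
  have he3 : Real.exp ((3 * (d : ℝ) + 7) * y) = Real.exp y ^ (3 * d + 7) := by
    rw [show (3 * (d : ℝ) + 7) = ((3 * d + 7 : ℕ) : ℝ) by push_cast; ring, Real.exp_nat_mul]
  have he4 : Real.exp (2 * y) = Real.exp y ^ 2 := by
    rw [show (2 : ℝ) * y = ((2 : ℕ) : ℝ) * y by push_cast; ring, Real.exp_nat_mul]
  have he5 : Real.exp ((2 * (d : ℝ) + 4) * y) = Real.exp y ^ (2 * d + 4) := by
    rw [show (2 * (d : ℝ) + 4) = ((2 * d + 4 : ℕ) : ℝ) by push_cast; ring, Real.exp_nat_mul]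
  have he6 : Real.exp (((d : ℝ) + 5) * y) = Real.exp y ^ (d + 5) := by
    rw [show ((d : ℝ) + 5) = ((d + 5 : ℕ) : ℝ) by push_cast; ring, Real.exp_nat_mul]
  have he7 : Real.exp ((2 * (d : ℝ) + 8) * y) = Real.exp y ^ (2 * d + 8) := by
    rw [show (2 * (d : ℝ) + 8) = ((2 * d + 8 : ℕ) : ℝ) by push_cast; ring, Real.exp_nat_mul]
  have he8 : Real.exp (((d : ℝ) + 1) * y) = Real.exp y ^ (d + 1) := by
    rw [show ((d : ℝ) + 1) = ((d + 1 : ℕ) : ℝ) by push_cast; ring, Real.exp_nat_mul]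
  have h1m : 1 < Real.exp y ^ (d + 3) := one_lt_pow₀ hEy (by omega)
  have hC3 : Real.cos (2 * π * ((d : ℝ) + 3) * x) ≤ 1 := Real.cos_le_one _
  have hbr : 0 < Real.exp y ^ (2 * d + 6) -
      2 * Real.exp y ^ (d + 3) * Real.cos (2 * π * ((d : ℝ) + 3) * x) + 1 := by
    have hfac : Real.exp y ^ (2 * d + 6) -
        2 * Real.exp y ^ (d + 3) * Real.cos (2 * π * ((d : ℝ) + 3) * x) + 1 =
        (Real.exp y ^ (d + 3) - 1) ^ 2 +
          2 * Real.exp y ^ (d + 3) * (1 - Real.cos (2 * π * ((d : ℝ) + 3) * x)) := by ring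
    rw [hfac]
    have h1 : 0 < (Real.exp y ^ (d + 3) - 1) ^ 2 := pow_pos (sub_pos.2 h1m) 2
    have h2 : 0 ≤ 2 * Real.exp y ^ (d + 3) * (1 - Real.cos (2 * π * ((d : ℝ) + 3) * x)) := by
      have h3 : (0:ℝ) < Real.exp y ^ (d + 3) := pow_pos hEy0 _
      nlinarith
    linarith
  have hD : 0 < Dden d x y := by
    rw [Dden, he1, he2]
    exact mul_pos (div_pos (sub_pos.2 h1m) hy) hbr
  refine ⟨?_, ?_, ?_, ?_⟩
  · -- main identity
    rw [gFun_re d hd x y hy, gFun_real d hd y hy, T1, T2, T3, Dden,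
      he1, he2, he3, he4, he5, he6, he7, he8]
    have hR : Real.exp y ^ (d + 3) - 1 ≠ 0 := ne_of_gt (sub_pos.2 h1m)
    have hbrne : Real.exp y ^ (2 * d + 6) -
        2 * Real.exp y ^ (d + 3) * Real.cos (2 * π * ((d : ℝ) + 3) * x) + 1 ≠ 0 := ne_of_gt hbr
    have hRlt : Real.exp (-y) ^ (d + 3) < 1 := by
      apply pow_lt_one₀ (Real.exp_pos _).le _ (by omega)
      rw [Real.exp_lt_one_iff]; linarith
    have hRpos : (0:ℝ) < Real.exp (-y) ^ (d + 3) := pow_pos (Real.exp_pos _) _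
    have hRm : (1:ℝ) - Real.exp (-y) ^ (d + 3) ≠ 0 := by linarith
    have hden2 : (1:ℝ) - 2 * Real.exp (-y) ^ (d + 3) * Real.cos (2 * π * ((d : ℝ) + 3) * x)
        + Real.exp (-y) ^ (2 * d + 6) ≠ 0 := by
      have hfac : (1:ℝ) - 2 * Real.exp (-y) ^ (d + 3) * Real.cos (2 * π * ((d : ℝ) + 3) * x)
          + Real.exp (-y) ^ (2 * d + 6) =
          (1 - Real.exp (-y) ^ (d + 3)) ^ 2 +
            2 * Real.exp (-y) ^ (d + 3) * (1 - Real.cos (2 * π * ((d : ℝ) + 3) * x)) := by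
        ring
      rw [hfac]
      have h1 : 0 < (1 - Real.exp (-y) ^ (d + 3)) ^ 2 := pow_pos (by linarith) 2
      have h2 : 0 ≤ 2 * Real.exp (-y) ^ (d + 3) * (1 - Real.cos (2 * π * ((d : ℝ) + 3) * x)) :=
        mul_nonneg (by positivity) (by linarith [Real.cos_le_one (2 * π * ((d : ℝ) + 3) * x)])
      positivity
    have hconv1 : (Real.exp (-y) ^ 2 * Real.cos (4 * π * x)
          + Real.exp (-y) ^ (d + 1) * Real.cos (2 * π * ((d : ℝ) + 1) * x)
          - Real.exp (-y) ^ (d + 5) * Real.cos (2 * π * ((d : ℝ) + 1) * x)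
          - Real.exp (-y) ^ (2 * d + 4) * Real.cos (4 * π * x))
        / (1 - 2 * Real.exp (-y) ^ (d + 3) * Real.cos (2 * π * ((d : ℝ) + 3) * x)
            + Real.exp (-y) ^ (2 * d + 6)) =
        (Real.exp y ^ (2 * d + 4) * Real.cos (4 * π * x)
          + Real.exp y ^ (d + 5) * Real.cos (2 * π * ((d : ℝ) + 1) * x)
          - Real.exp y ^ (d + 1) * Real.cos (2 * π * ((d : ℝ) + 1) * x)
          - Real.exp y ^ 2 * Real.cos (4 * π * x))
        / (Real.exp y ^ (2 * d + 6) -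
            2 * Real.exp y ^ (d + 3) * Real.cos (2 * π * ((d : ℝ) + 3) * x) + 1) := by
      rw [div_eq_div_iff hden2 hbrne, Real.exp_neg]
      have hne : Real.exp y ≠ 0 := hEy0.ne'
      simp only [inv_pow]
      field_simp
      ring
    have hconv2 : (Real.exp (-y) ^ 2 + Real.exp (-y) ^ (d + 1)) *
        (1 - Real.exp (-y) ^ (d + 3))⁻¹ =
        (Real.exp y ^ (d + 1) + Real.exp y ^ 2) / (Real.exp y ^ (d + 3) - 1) := by
      rw [← div_eq_mul_inv, div_eq_div_iff hRm hR, Real.exp_neg]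
      have hne : Real.exp y ≠ 0 := hEy0.ne'
      simp only [inv_pow]
      field_simp
      ring
    rw [hconv1, hconv2]
    have hy0 : y ≠ 0 := hy.ne'
    generalize hB : Real.exp y ^ (2 * d + 6) -
        2 * Real.exp y ^ (d + 3) * Real.cos (2 * π * ((d : ℝ) + 3) * x) + 1 = B at hbrne ⊢
    field_simp
    rw [← hB]
    ring
  · -- T1 nonneg
    rw [T1, he3, he4, he5, he6]
    apply div_nonneg _ hD.le
    apply mul_nonneg
    · have := Real.cos_le_one (4 * π * x); linarith
    · have hfac : Real.exp y ^ (3 * d + 7) + Real.exp y ^ 2 - Real.exp y ^ (2 * d + 4)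
          - Real.exp y ^ (d + 5) =
          Real.exp y ^ 2 * ((Real.exp y ^ (2 * d + 2) - 1) * (Real.exp y ^ (d + 3) - 1)) := by
        ring
      rw [hfac]
      have h1 : (1:ℝ) ≤ Real.exp y ^ (2 * d + 2) := one_le_pow₀ hEy.le
      have h2 : (1:ℝ) ≤ Real.exp y ^ (d + 3) := one_le_pow₀ hEy.le
      have h3 : (0:ℝ) ≤ Real.exp y ^ 2 := by positivity
      exact mul_nonneg h3 (mul_nonneg (by linarith) (by linarith))
  · -- T2 nonneg
    rw [T2, he5, he6, he7, he8]
    apply div_nonneg _ hD.le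
    apply mul_nonneg
    · have := Real.cos_le_one (2 * π * ((d : ℝ) + 1) * x); linarith
    · have hfac : Real.exp y ^ (2 * d + 8) + Real.exp y ^ (d + 1) - Real.exp y ^ (2 * d + 4)
          - Real.exp y ^ (d + 5) =
          Real.exp y ^ (d + 1) * ((Real.exp y ^ (d + 3) - 1) * (Real.exp y ^ 4 - 1)) := by
        ring
      rw [hfac]
      have h1 : (1:ℝ) ≤ Real.exp y ^ (d + 3) := one_le_pow₀ hEy.le
      have h2 : (1:ℝ) ≤ Real.exp y ^ 4 := one_le_pow₀ hEy.le
      have h3 : (0:ℝ) ≤ Real.exp y ^ (d + 1) := by positivity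
      exact mul_nonneg h3 (mul_nonneg (by linarith) (by linarith))
  · -- T3 nonneg
    rw [T3]
    apply div_nonneg _ hD.le
    have h1 : (0:ℝ) ≤ 1 - Real.cos (2 * π * ((d : ℝ) + 3) * x) := by linarith
    have h2 : (0:ℝ) < Real.exp ((2 * (d : ℝ) + 4) * y) := Real.exp_pos _
    have h3 : (0:ℝ) < Real.exp (((d : ℝ) + 5) * y) := Real.exp_pos _
    apply mul_nonneg (mul_nonneg (by norm_num) h1) (by linarith)
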